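/- Let s be a complex number with −1 < Re(s) < 1. Then ζ(s) = [2^{s−1} / Γ(1+s)] · ∫_0^∞ t^{s} · (1/sinh²(t) − 1/t²) dt. -/

import Mathlib

open MeasureTheory Set Filter Asymptotics Real Topology

noncomputable def zf : ℝ → ℂ := fun t => ((1 / (Real.sinh t) ^ 2 - 1 / t ^ 2 : ℝ) : ℂ)
noncomputable def zg : ℝ → ℂ := fun t => ((1 / (Real.sinh t) ^ 2 : ℝ) : ℂ)

lemma sinh_le_mul_cosh {t : ℝ} (ht : 0 ≤ t) : Real.sinh t ≤ t * Real.cosh t := by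
  have key : MonotoneOn (fun t : ℝ => t * Real.cosh t - Real.sinh t) (Ici 0) := by
    have hd : ∀ x : ℝ, HasDerivAt (fun t : ℝ => t * Real.cosh t - Real.sinh t)
        (x * Real.sinh x) x := by
      intro x
      have := ((hasDerivAt_id x).mul (Real.hasDerivAt_cosh x)).sub (Real.hasDerivAt_sinh x)
      exact this.congr_deriv (by simp only [id]; ring)
    refine monotoneOn_of_deriv_nonneg (convex_Ici 0) ?_ ?_ ?_
    · exact ((continuous_id.mul Real.continuous_cosh).sub Real.continuous_sinh).continuousOn
    · exact fun x _ => ((hd x).differentiableAt).differentiableWithinAt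
    · intro x hx
      rw [interior_Ici, mem_Ioi] at hx
      rw [(hd x).deriv]
      exact mul_nonneg hx.le (by simpa using hx.le)
  have := key (self_mem_Ici) (mem_Ici.mpr ht) ht
  simpa using this

lemma zf_bounds {t : ℝ} (ht : 0 < t) :
    0 ≤ 1 / t ^ 2 - 1 / Real.sinh t ^ 2 ∧ 1 / t ^ 2 - 1 / Real.sinh t ^ 2 ≤ 1 := by
  have hs : 0 < Real.sinh t := Real.sinh_pos_iff.mpr ht
  have h1 : t ≤ Real.sinh t := Real.self_le_sinh_iff.mpr ht.le
  constructor
  · have : 1 / Real.sinh t ^ 2 ≤ 1 / t ^ 2 := by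
      apply one_div_le_one_div_of_le (by positivity)
      exact pow_le_pow_left₀ ht.le h1 2
    linarith
  · rw [div_sub_div _ _ (by positivity : t^2 ≠ 0) (by positivity : Real.sinh t ^2 ≠ 0)]
    rw [div_le_one (by positivity)]
    have h2 : Real.sinh t ≤ t * Real.cosh t := sinh_le_mul_cosh ht.le
    have h3 : Real.sinh t ^ 2 ≤ t ^ 2 * Real.cosh t ^ 2 := by
      calc Real.sinh t ^ 2 ≤ (t * Real.cosh t) ^ 2 := by
            apply pow_le_pow_left₀ hs.le h2
        _ = t ^ 2 * Real.cosh t ^ 2 := by ring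
    have h4 : Real.cosh t ^ 2 = 1 + Real.sinh t ^ 2 := by
      have := Real.cosh_sq t; linarith [Real.cosh_sq t]
    nlinarith
  
lemma zf_norm_le_one {t : ℝ} (ht : 0 < t) : ‖zf t‖ ≤ 1 := by
  rw [zf, Complex.norm_real, Real.norm_eq_abs]
  obtain ⟨hb0, hb1⟩ := zf_bounds ht
  rw [abs_le]; constructor <;> linarith

lemma zf_norm_le_sq {t : ℝ} (ht : 0 < t) : ‖zf t‖ ≤ 1 / t ^ 2 := by
  rw [zf, Complex.norm_real, Real.norm_eq_abs]
  obtain ⟨hb0, hb1⟩ := zf_bounds ht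
  have hs : 0 < Real.sinh t := Real.sinh_pos_iff.mpr ht
  have : 0 < 1 / Real.sinh t ^ 2 := by positivity
  rw [abs_le]; constructor <;> linarith

lemma exp_quarter_le_sinh {t : ℝ} (ht : 1 ≤ t) : Real.exp t / 4 ≤ Real.sinh t := by
  rw [Real.sinh_eq]
  have h1 : Real.exp (-t) ≤ 1 := Real.exp_le_one_iff.mpr (by linarith)
  have h2 : 2 ≤ Real.exp t := by
    calc (2:ℝ) ≤ Real.exp 1 := by have := Real.add_one_le_exp 1; linarith
      _ ≤ Real.exp t := Real.exp_le_exp.mpr ht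
  linarith

lemma zg_norm_le {t : ℝ} (ht : 1 ≤ t) : ‖zg t‖ ≤ 16 * Real.exp (-2 * t) := by
  have ht0 : (0:ℝ) < t := by linarith
  have hs : 0 < Real.sinh t := Real.sinh_pos_iff.mpr ht0
  have h1 : Real.exp t / 4 ≤ Real.sinh t := exp_quarter_le_sinh ht
  have h2 : Real.exp t ^ 2 / 16 ≤ Real.sinh t ^ 2 := by nlinarith [Real.exp_pos t]
  rw [zg, Complex.norm_real, Real.norm_eq_abs, abs_of_nonneg (by positivity)]
  rw [div_le_iff₀ (by positivity)]
  have h3 : Real.exp (-2 * t) * Real.exp t ^ 2 = 1 := by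
    rw [← Real.exp_nat_mul]
    rw [← Real.exp_add]; norm_num
  calc (1:ℝ) = Real.exp (-2*t) * Real.exp t ^ 2 := h3.symm
    _ ≤ Real.exp (-2*t) * (16 * Real.sinh t ^ 2) := by
        apply mul_le_mul_of_nonneg_left (by linarith) (Real.exp_pos _).le
    _ = 16 * Real.exp (-2*t) * Real.sinh t ^ 2 := by ring

lemma hasSum_zg_real {t : ℝ} (ht : 0 < t) :
    HasSum (fun n : ℕ => (4 * ((n : ℝ) + 1)) * Real.exp (-(2 * ((n : ℝ) + 1)) * t))
      (1 / Real.sinh t ^ 2) := by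
  set x := Real.exp (-2 * t) with hx
  have hx1 : ‖x‖ < 1 := by
    rw [Real.norm_eq_abs, abs_of_pos (Real.exp_pos _)]
    exact Real.exp_lt_one_iff.mpr (by linarith)
  have hS : HasSum (fun n : ℕ => (n : ℝ) * x ^ n) (x / (1 - x) ^ 2) :=
    hasSum_coe_mul_geometric_of_norm_lt_one hx1
  have hS1 : HasSum (fun n : ℕ => ((n + 1 : ℕ) : ℝ) * x ^ (n + 1)) (x / (1 - x) ^ 2) := by
    have := (hasSum_nat_add_iff' 1).mpr hS
    simpa using this
  have hS2 := hS1.mul_left 4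
  have hterm : ∀ n : ℕ, 4 * (((n + 1 : ℕ) : ℝ) * x ^ (n + 1)) =
      (4 * ((n : ℝ) + 1)) * Real.exp (-(2 * ((n : ℝ) + 1)) * t) := by
    intro n
    have : x ^ (n + 1) = Real.exp (-(2 * ((n : ℝ) + 1)) * t) := by
      rw [hx, ← Real.exp_nat_mul]
      congr 1
      push_cast
      ring
    rw [this]
    push_cast
    ring
  have hval : 4 * (x / (1 - x) ^ 2) = 1 / Real.sinh t ^ 2 := by
    set u := Real.exp t with hu
    set v := Real.exp (-t) with hv
    have huv : u * v = 1 := by rw [hu, hv, ← Real.exp_add]; simp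
    have hxv : x = v ^ 2 := by
      rw [hx, hv, ← Real.exp_nat_mul]; congr 1; push_cast; ring
    have hsinh : Real.sinh t = (u - v) / 2 := Real.sinh_eq t
    have hsp : 0 < Real.sinh t := Real.sinh_pos_iff.mpr ht
    have huv' : u - v ≠ 0 := by
      intro h; rw [hsinh] at hsp; rw [h] at hsp; simp at hsp
    have hvne : v ≠ 0 := (Real.exp_pos _).ne'
    have h1v : 1 - v ^ 2 = v * (u - v) := by linear_combination -huv
    rw [hxv, hsinh, h1v]
    field_simp
    ring
  rw [← hval]
  simpa only [hterm] using hS2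

lemma hasSum_zg_complex {t : ℝ} (ht : t ∈ Ioi (0:ℝ)) :
    HasSum (fun n : ℕ => ((4 * ((n : ℝ) + 1) : ℝ) : ℂ) *
      (Real.exp (-(2 * ((n : ℝ) + 1)) * t) : ℂ)) (zg t) := by
  rw [mem_Ioi] at ht
  have := Complex.hasSum_ofReal.mpr (hasSum_zg_real ht)
  rw [zg]
  convert this using 2 with n
  push_cast
  ring

noncomputable def zfA : ℝ → ℂ := (Set.Ioc (0:ℝ) 1).indicator zf
noncomputable def zgC : ℝ → ℂ := (Set.Ioi (1:ℝ)).indicator zg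

lemma zg_meas : Measurable zg := by
  apply Complex.measurable_ofReal.comp
  exact measurable_const.div (Real.continuous_sinh.measurable.pow_const 2)

lemma zf_meas : Measurable zf := by
  apply Complex.measurable_ofReal.comp
  exact (measurable_const.div (Real.continuous_sinh.measurable.pow_const 2)).sub
    (measurable_const.div (measurable_id.pow_const 2))
lemma zfA_meas : Measurable zfA := zf_meas.indicator measurableSet_Ioc
lemma zgC_meas : Measurable zgC := zg_meas.indicator measurableSet_Ioi

lemma zfA_top (a : ℝ) : zfA =O[atTop] (fun t : ℝ => t ^ (-a)) := by
  have h : zfA =ᶠ[atTop] (fun _ => (0:ℂ)) := by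
    filter_upwards [eventually_gt_atTop 1] with t ht
    exact Set.indicator_of_notMem (fun hmem => absurd hmem.2 (not_le.mpr ht)) _
  exact h.trans_isBigO (isBigO_zero _ _)

lemma zfA_bot : zfA =O[𝓝[>] (0:ℝ)] (fun t : ℝ => t ^ (-(0:ℝ))) := by
  apply isBigO_of_le
  intro t
  rw [neg_zero, Real.rpow_zero, norm_one]
  by_cases h : t ∈ Ioc (0:ℝ) 1
  · rw [zfA, Set.indicator_of_mem h]; exact zf_norm_le_one h.1
  · rw [zfA, Set.indicator_of_notMem h]; simp

lemma zgC_top : zgC =O[atTop] (fun t : ℝ => Real.exp (-2 * t)) := by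
  rw [isBigO_iff]
  refine ⟨16, ?_⟩
  filter_upwards [eventually_gt_atTop 1] with t ht
  rw [zgC, Set.indicator_of_mem (mem_Ioi.mpr ht), Real.norm_eq_abs,
    abs_of_pos (Real.exp_pos _)]
  exact zg_norm_le ht.le

lemma zgC_bot : zgC =O[𝓝[>] (0:ℝ)] (fun t : ℝ => t ^ (-(0:ℝ))) := by
  have h : zgC =ᶠ[𝓝[>] (0:ℝ)] (fun _ => (0:ℂ)) := by
    filter_upwards [Ioo_mem_nhdsGT_of_mem (show (0:ℝ) ∈ Ico (0:ℝ) 1 by norm_num)] with t ht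
    exact Set.indicator_of_notMem (fun hm => absurd (mem_Ioi.mp hm) (not_lt.mpr ht.2.le)) _
  exact h.trans_isBigO (isBigO_zero _ _)

lemma zfA_int : IntegrableOn zfA (Ioi (0:ℝ)) := by
  have hmaj : Integrable ((Set.Ioc (0:ℝ) 1).indicator (fun _ => (1:ℝ))) := by
    rw [integrable_indicator_iff measurableSet_Ioc]
    exact integrableOn_const measure_Ioc_lt_top.ne
  refine (hmaj.integrableOn).mono' zfA_meas.aestronglyMeasurable (ae_of_all _ fun t => ?_)
  by_cases h : t ∈ Ioc (0:ℝ) 1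
  · rw [zfA, Set.indicator_of_mem h, Set.indicator_of_mem h]
    exact zf_norm_le_one h.1
  · rw [zfA, Set.indicator_of_notMem h, Set.indicator_of_notMem h]; simp

lemma zgC_int : IntegrableOn zgC (Ioi (0:ℝ)) := by
  have hmaj : IntegrableOn (fun t : ℝ => 16 * Real.exp (-2 * t)) (Ioi (0:ℝ)) :=
    (exp_neg_integrableOn_Ioi 0 (by norm_num : (0:ℝ) < 2)).const_mul 16
  refine hmaj.mono' zgC_meas.aestronglyMeasurable (ae_of_all _ fun t => ?_)
  by_cases h : t ∈ Ioi (1:ℝ)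
  · rw [zgC, Set.indicator_of_mem h]
    exact zg_norm_le (mem_Ioi.mp h).le
  · rw [zgC, Set.indicator_of_notMem h]
    simp only [norm_zero]
    positivity

lemma mc_A {s : ℂ} (hs : -1 < s.re) : MellinConvergent zfA (s + 1) :=
  mellinConvergent_of_isBigO_rpow zfA_int.locallyIntegrableOn (zfA_top (s.re + 2))
    (by simp only [Complex.add_re, Complex.one_re]; linarith) zfA_bot
    (by simp only [Complex.add_re, Complex.one_re]; linarith)

lemma mc_C {s : ℂ} (hs : -1 < s.re) : MellinConvergent zgC (s + 1) :=
  mellinConvergent_of_isBigO_rpow_exp (by norm_num : (0:ℝ) < 2)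
    zgC_int.locallyIntegrableOn zgC_top zgC_bot
    (by simp only [Complex.add_re, Complex.one_re]; linarith)

lemma dA {s : ℂ} (hs : -1 < s.re) : DifferentiableAt ℂ (fun z => mellin zfA (z + 1)) s := by
  have h1 : DifferentiableAt ℂ (mellin zfA) (s + 1) :=
    mellin_differentiableAt_of_isBigO_rpow zfA_int.locallyIntegrableOn (zfA_top (s.re + 2))
      (by simp only [Complex.add_re, Complex.one_re]; linarith) zfA_bot
      (by simp only [Complex.add_re, Complex.one_re]; linarith)
  exact h1.comp (f := fun z : ℂ => z + 1) s (differentiableAt_id.add_const 1)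

lemma dC {s : ℂ} (hs : -1 < s.re) : DifferentiableAt ℂ (fun z => mellin zgC (z + 1)) s := by
  have h1 : DifferentiableAt ℂ (mellin zgC) (s + 1) :=
    mellin_differentiableAt_of_isBigO_rpow_exp (by norm_num : (0:ℝ) < 2)
      zgC_int.locallyIntegrableOn zgC_top zgC_bot
      (by simp only [Complex.add_re, Complex.one_re]; linarith)
  exact h1.comp (f := fun z : ℂ => z + 1) s (differentiableAt_id.add_const 1)

lemma mellinA_eq (s : ℂ) : mellin zfA (s + 1) = ∫ t in Ioc (0:ℝ) 1, (t:ℂ) ^ s * zf t := by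
  rw [mellin]
  have h : ∀ t : ℝ, (t:ℂ) ^ (s + 1 - 1) • zfA t =
      (Ioc (0:ℝ) 1).indicator (fun t : ℝ => (t:ℂ) ^ s * zf t) t := by
    intro t
    simp only [add_sub_cancel_right, smul_eq_mul, zfA]
    by_cases h : t ∈ Ioc (0:ℝ) 1 <;>
      simp [Set.indicator_of_mem, Set.indicator_of_notMem, h]
  simp_rw [h]
  rw [integral_indicator measurableSet_Ioc, Measure.restrict_restrict measurableSet_Ioc,
    Set.inter_eq_left.mpr (fun t ht => ht.1)]

lemma mellinC_eq (s : ℂ) : mellin zgC (s + 1) = ∫ t in Ioi (1:ℝ), (t:ℂ) ^ s * zg t := by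
  rw [mellin]
  have h : ∀ t : ℝ, (t:ℂ) ^ (s + 1 - 1) • zgC t =
      (Ioi (1:ℝ)).indicator (fun t : ℝ => (t:ℂ) ^ s * zg t) t := by
    intro t
    simp only [add_sub_cancel_right, smul_eq_mul, zgC]
    by_cases h : t ∈ Ioi (1:ℝ) <;>
      simp [Set.indicator_of_mem, Set.indicator_of_notMem, h]
  simp_rw [h]
  rw [integral_indicator measurableSet_Ioi, Measure.restrict_restrict measurableSet_Ioi,
    Set.Ioi_inter_Ioi, show ((1:ℝ) ⊔ 0) = 1 from sup_eq_left.mpr zero_le_one]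

noncomputable def Gfun : ℂ → ℂ :=
  fun s => mellin zfA (s + 1) + mellin zgC (s + 1) + 1 / (s - 1)
noncomputable def Zfun : ℂ → ℂ :=
  fun s => (2:ℂ) ^ (1 - s) * Complex.Gamma (s + 1) * riemannZeta s

-- pointwise algebraic identity on (0, ∞)
lemma zf_sub_identity {t : ℝ} (ht : 0 < t) (s : ℂ) :
    (t:ℂ) ^ s * zf t = (t:ℂ) ^ s * zg t - (t:ℂ) ^ (s - 2) := by
  have ht0 : (t:ℂ) ≠ 0 := Complex.ofReal_ne_zero.mpr ht.ne'
  have h2 : (t:ℂ) ^ ((2:ℕ):ℂ) = (t:ℂ) ^ (2:ℕ) := Complex.cpow_natCast _ 2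
  have hsub : (t:ℂ) ^ (s - 2) = (t:ℂ) ^ s / (t:ℂ) ^ (2:ℕ) := by
    rw [show (2:ℂ) = ((2:ℕ):ℂ) by norm_num] 
    rw [Complex.cpow_sub _ _ ht0, h2]
  have hzf : zf t = zg t - ((1 / t ^ 2 : ℝ) : ℂ) := by
    rw [zf, zg]; push_cast; ring
  rw [hzf, hsub]
  have : ((1 / t ^ 2 : ℝ) : ℂ) = 1 / (t:ℂ) ^ (2:ℕ) := by push_cast; ring
  rw [this]
  have htp : (t:ℂ) ^ (2:ℕ) ≠ 0 := pow_ne_zero _ ht0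
  field_simp

lemma zg_loc_int : LocallyIntegrableOn zg (Ioi (0:ℝ)) := by
  apply ContinuousOn.locallyIntegrableOn _ measurableSet_Ioi
  have : ContinuousOn (fun t : ℝ => 1 / Real.sinh t ^ 2) (Ioi 0) := by
    apply ContinuousOn.div continuousOn_const
      (Real.continuous_sinh.continuousOn.pow 2)
    intro t ht
    have : 0 < Real.sinh t := Real.sinh_pos_iff.mpr (mem_Ioi.mp ht)
    exact pow_ne_zero _ this.ne'
  exact Complex.continuous_ofReal.comp_continuousOn this

lemma zg_top : zg =O[atTop] (fun t : ℝ => Real.exp (-2 * t)) := by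
  rw [isBigO_iff]
  refine ⟨16, ?_⟩
  filter_upwards [eventually_ge_atTop 1] with t ht
  rw [Real.norm_eq_abs, abs_of_pos (Real.exp_pos _)]
  exact zg_norm_le ht

lemma zg_bot : zg =O[𝓝[>] (0:ℝ)] (fun t : ℝ => t ^ (-(2:ℝ))) := by
  rw [isBigO_iff]
  refine ⟨1, ?_⟩
  filter_upwards [self_mem_nhdsWithin] with t ht
  rw [mem_Ioi] at ht
  have hs : 0 < Real.sinh t := Real.sinh_pos_iff.mpr ht
  have h1 : t ≤ Real.sinh t := Real.self_le_sinh_iff.mpr ht.le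
  have hrn : t ^ (-(2:ℝ)) = 1 / t ^ 2 := by
    rw [Real.rpow_neg ht.le, ← Real.rpow_natCast t 2]
    norm_num
  rw [zg, Complex.norm_real, Real.norm_eq_abs, Real.norm_eq_abs, hrn,
    abs_of_nonneg (by positivity), abs_of_nonneg (by positivity), one_mul]
  apply one_div_le_one_div_of_le (by positivity)
  exact pow_le_pow_left₀ ht.le h1 2

lemma mc_g {s : ℂ} (hs : 1 < s.re) : MellinConvergent zg (s + 1) :=
  mellinConvergent_of_isBigO_rpow_exp (by norm_num : (0:ℝ) < 2) zg_loc_int zg_top zg_bot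
    (by simp; linarith)

lemma Ig_int {s : ℂ} (hs : 1 < s.re) :
    IntegrableOn (fun t : ℝ => (t:ℂ) ^ s * zg t) (Ioi (0:ℝ)) := by
  have := mc_g hs
  rw [MellinConvergent] at this
  simpa only [add_sub_cancel_right, smul_eq_mul] using this

lemma mellin_zg_val {s : ℂ} (hs : 1 < s.re) :
    mellin zg (s + 1) = (2:ℂ) ^ (1 - s) * Complex.Gamma (s + 1) * riemannZeta s := by
  have hs1 : 0 < (s + 1).re := by simp; linarith
  have hsum := hasSum_mellin (a := fun n : ℕ => ((4 * ((n : ℝ) + 1) : ℝ) : ℂ))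
    (p := fun n : ℕ => 2 * ((n : ℝ) + 1)) (F := zg) (s := s + 1)
    (fun n => Or.inr (by positivity)) hs1 (fun t ht => hasSum_zg_complex ht) ?_
  · -- massage term
    set C : ℂ := Complex.Gamma (s + 1) * (2:ℂ) ^ (1 - s) with hC
    have hterm : ∀ n : ℕ,
        Complex.Gamma (s + 1) * ((4 * ((n : ℝ) + 1) : ℝ) : ℂ) / (↑(2 * ((n : ℝ) + 1)) : ℂ) ^ (s + 1)
          = C * (1 / ((n:ℂ) + 1) ^ (s + 1 - 1)) := by
      intro n
      have hn : (0:ℝ) ≤ (n : ℝ) + 1 := by positivity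
      have hN : ((n:ℂ) + 1) ≠ 0 := by
        intro h
        have := congrArg Complex.re h
        simp at this
        linarith [Nat.cast_nonneg (α := ℝ) n]
      have hNr : (((n:ℝ) + 1 : ℝ) : ℂ) = (n:ℂ) + 1 := by push_cast; ring
      have hsplit : ((2 * ((n : ℝ) + 1) : ℝ) : ℂ) ^ (s + 1)
          = (2:ℂ) ^ (s + 1) * ((n:ℂ) + 1) ^ (s + 1) := by
        rw [show ((2 * ((n : ℝ) + 1) : ℝ) : ℂ) = ((2:ℝ):ℂ) * (((n:ℝ) + 1 : ℝ) : ℂ) by push_cast; ring,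
          Complex.mul_cpow_ofReal_nonneg (by norm_num) hn _, hNr]
        norm_num
      have hNe : ((n:ℂ) + 1) ^ (s + 1) = ((n:ℂ) + 1) ^ s * ((n:ℂ) + 1) := by
        rw [Complex.cpow_add _ _ hN, Complex.cpow_one]
      have h2c : (2:ℂ) ^ (s + 1) * (2:ℂ) ^ (1 - s) = 4 := by
        rw [← Complex.cpow_add _ _ two_ne_zero,
          show s + 1 + (1 - s) = ((2:ℕ):ℂ) by push_cast; ring, Complex.cpow_natCast]
        norm_num
      have hNs : ((n:ℂ) + 1) ^ s ≠ 0 := by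
        simp [Complex.cpow_eq_zero_iff, hN]
      have h2s : (2:ℂ) ^ (s + 1) ≠ 0 := by
        simp [Complex.cpow_eq_zero_iff]
      rw [hsplit, hNe, hC, add_sub_cancel_right]
      have : ((4 * ((n : ℝ) + 1) : ℝ) : ℂ) = 4 * ((n:ℂ) + 1) := by push_cast; ring
      rw [this]
      field_simp
      linear_combination (-(Complex.Gamma (s+1))) * h2c
    simp_rw [hterm, add_sub_cancel_right] at hsum
    have hCne : C ≠ 0 := by
      apply mul_ne_zero
      · exact Complex.Gamma_ne_zero_of_re_pos hs1
      · simp [Complex.cpow_eq_zero_iff]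
    have h2 := hsum.mul_left C⁻¹
    simp_rw [← mul_assoc, inv_mul_cancel₀ hCne, one_mul] at h2
    have hzeta : riemannZeta s = C⁻¹ * mellin zg (s + 1) := by
      rw [zeta_eq_tsum_one_div_nat_add_one_cpow (by linarith : 1 < s.re), ← h2.tsum_eq]
    rw [hzeta, hC]
    have hΓ1 : Complex.Gamma (s + 1) ≠ 0 := Complex.Gamma_ne_zero_of_re_pos hs1
    field_simp
  · -- summability
    have hσ : 1 < s.re := hs
    have hsummand : ∀ n : ℕ,
        ‖((4 * ((n : ℝ) + 1) : ℝ) : ℂ)‖ / (2 * ((n : ℝ) + 1)) ^ (s + 1).re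
          = (4 / 2 ^ (s.re + 1)) * (1 / ((n:ℝ) + 1) ^ s.re) := by
      intro n
      have hn : (0:ℝ) < (n : ℝ) + 1 := by positivity
      have hre : (s + 1).re = s.re + 1 := by simp
      rw [hre, Complex.norm_real, Real.norm_eq_abs, abs_of_nonneg (by positivity),
        Real.mul_rpow (by norm_num) hn.le]
      have h1 : ((n:ℝ) + 1) ^ (s.re + 1) = ((n:ℝ) + 1) ^ s.re * ((n:ℝ) + 1) := by
        rw [Real.rpow_add hn, Real.rpow_one]
      rw [h1]
      have h2 : ((n:ℝ) + 1) ^ s.re ≠ 0 := by positivity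
      have h3 : (2:ℝ) ^ (s.re + 1) ≠ 0 := by positivity
      field_simp
    simp_rw [hsummand]
    apply Summable.mul_left
    have : Summable (fun n : ℕ => 1 / ((n:ℝ) + 1) ^ s.re) := by
      have hbase := Real.summable_one_div_nat_rpow.mpr hσ
      have := (summable_nat_add_iff 1).mpr hbase
      refine this.congr fun n => ?_
      push_cast
      ring
    exact this

lemma zg_split {s : ℂ} (hs : 1 < s.re) :
    mellin zg (s + 1) = (∫ t in Ioc (0:ℝ) 1, (t:ℂ) ^ s * zg t) + mellin zgC (s + 1) := by
  have hint := Ig_int hs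
  have hmell : mellin zg (s + 1) = ∫ t in Ioi (0:ℝ), (t:ℂ) ^ s * zg t := by
    rw [mellin]; simp_rw [add_sub_cancel_right, smul_eq_mul]
  rw [hmell, mellinC_eq]
  rw [← Ioc_union_Ioi_eq_Ioi (zero_le_one : (0:ℝ) ≤ 1)]
  rw [setIntegral_union (Ioc_disjoint_Ioi le_rfl) measurableSet_Ioi
    (hint.mono_set (Ioc_subset_Ioi_self.trans (Ioi_subset_Ioi le_rfl)) )
    (hint.mono_set (Ioi_subset_Ioi zero_le_one))]

lemma Ioc_part {s : ℂ} (hs : 1 < s.re) :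
    ∫ t in Ioc (0:ℝ) 1, (t:ℂ) ^ s * zg t = mellin zfA (s + 1) + 1 / (s - 1) := by
  have hzg_int : IntegrableOn (fun t : ℝ => (t:ℂ) ^ s * zg t) (Ioc (0:ℝ) 1) :=
    (Ig_int hs).mono_set Ioc_subset_Ioi_self
  have hcp_int : IntegrableOn (fun t : ℝ => (t:ℂ) ^ (s - 2)) (Ioc (0:ℝ) 1) := by
    have := intervalIntegral.intervalIntegrable_cpow' (a := 0) (b := 1)
      (r := s - 2) (by simp; linarith)
    rwa [intervalIntegrable_iff_integrableOn_Ioc_of_le zero_le_one] at this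
  have hcongr : ∀ t ∈ Ioc (0:ℝ) 1, (t:ℂ) ^ s * zf t
      = (t:ℂ) ^ s * zg t - (t:ℂ) ^ (s - 2) := fun t ht => zf_sub_identity ht.1 s
  have hval : ∫ t in Ioc (0:ℝ) 1, (t:ℂ) ^ (s - 2) = 1 / (s - 1) := by
    rw [← intervalIntegral.integral_of_le zero_le_one,
      integral_cpow (Or.inl (by simp; linarith))]
    have hne : s - 2 + 1 ≠ 0 := by
      intro h
      have := congrArg Complex.re h
      simp at this
      linarith
    rw [show s - 2 + 1 = s - 1 by ring]
    rw [Complex.ofReal_one, Complex.one_cpow, Complex.ofReal_zero,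
      Complex.zero_cpow (by intro h; apply hne; rw [show s - 2 + 1 = s - 1 by ring]; exact h)]
    simp
  have heq : (∫ t in Ioc (0:ℝ) 1, (t:ℂ) ^ s * zf t)
      = ∫ t in Ioc (0:ℝ) 1, ((t:ℂ) ^ s * zg t - (t:ℂ) ^ (s - 2)) :=
    setIntegral_congr_fun (μ := volume) measurableSet_Ioc hcongr
  rw [mellinA_eq, heq, integral_sub hzg_int hcp_int, hval]
  ring

lemma G_eq_Z_gt {s : ℂ} (hs : 1 < s.re) : Gfun s = Zfun s := by
  have h1 := mellin_zg_val hs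
  have h2 := zg_split hs
  have h3 := Ioc_part hs
  simp only [Gfun, Zfun]
  rw [← h1, h2, h3]
  ring

lemma I_eq_G {s : ℂ} (h0 : -1 < s.re) (h1 : s.re < 1) :
    ∫ t in Ioi (0:ℝ), (t:ℂ) ^ s * zf t = Gfun s := by
  have hintA : IntegrableOn (fun t : ℝ => (t:ℂ) ^ s * zf t) (Ioc (0:ℝ) 1) := by
    have := mc_A h0
    rw [MellinConvergent] at this
    simp_rw [add_sub_cancel_right, smul_eq_mul] at this
    have h2 := this.mono_set (Ioc_subset_Ioi_self : Ioc (0:ℝ) 1 ⊆ Ioi 0)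
    exact h2.congr_fun (fun t ht => by simp only [zfA, Set.indicator_of_mem ht]) measurableSet_Ioc
  have hintCg : IntegrableOn (fun t : ℝ => (t:ℂ) ^ s * zg t) (Ioi (1:ℝ)) := by
    have := mc_C h0
    rw [MellinConvergent] at this
    simp_rw [add_sub_cancel_right, smul_eq_mul] at this
    have h2 := this.mono_set (Ioi_subset_Ioi zero_le_one)
    exact h2.congr_fun (fun t ht => by simp only [zgC, Set.indicator_of_mem ht]) measurableSet_Ioi
  have hintP : IntegrableOn (fun t : ℝ => (t:ℂ) ^ (s - 2)) (Ioi (1:ℝ)) :=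
    integrableOn_Ioi_cpow_of_lt (by simp; linarith) zero_lt_one
  have hcongr : ∀ t ∈ Ioi (1:ℝ), (t:ℂ) ^ s * zg t - (t:ℂ) ^ (s - 2) = (t:ℂ) ^ s * zf t :=
    fun t ht => (zf_sub_identity (lt_trans zero_lt_one (mem_Ioi.mp ht)) s).symm
  have hintB : IntegrableOn (fun t : ℝ => (t:ℂ) ^ s * zf t) (Ioi (1:ℝ)) := by
    refine IntegrableOn.congr_fun (f := fun t : ℝ => (t:ℂ) ^ s * zg t - (t:ℂ) ^ (s - 2))
      ?_ hcongr measurableSet_Ioi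
    exact hintCg.sub hintP
  have hsplit : ∫ t in Ioi (0:ℝ), (t:ℂ) ^ s * zf t
      = (∫ t in Ioc (0:ℝ) 1, (t:ℂ) ^ s * zf t) + ∫ t in Ioi (1:ℝ), (t:ℂ) ^ s * zf t := by
    rw [← Ioc_union_Ioi_eq_Ioi (zero_le_one : (0:ℝ) ≤ 1)]
    exact setIntegral_union (Ioc_disjoint_Ioi le_rfl) measurableSet_Ioi hintA hintB
  have hB : ∫ t in Ioi (1:ℝ), (t:ℂ) ^ s * zf t = mellin zgC (s + 1) + 1 / (s - 1) := by
    have heq : (∫ t in Ioi (1:ℝ), ((t:ℂ) ^ s * zg t - (t:ℂ) ^ (s - 2)))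
        = ∫ t in Ioi (1:ℝ), (t:ℂ) ^ s * zf t :=
      setIntegral_congr_fun (μ := volume) measurableSet_Ioi hcongr
    rw [← heq, integral_sub hintCg hintP, mellinC_eq]
    have hval : ∫ t in Ioi (1:ℝ), (t:ℂ) ^ (s - 2) = -1 / (s - 1) := by
      rw [integral_Ioi_cpow_of_lt (by simp; linarith) zero_lt_one]
      rw [show s - 2 + 1 = s - 1 by ring, Complex.ofReal_one, Complex.one_cpow]
    rw [hval]
    ring
  rw [hsplit, hB, ← mellinA_eq]
  simp only [Gfun]
  ring

def Om : Set ℂ := {z : ℂ | -1 < z.re} \ {1}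

lemma Om_open : IsOpen Om :=
  (isOpen_lt continuous_const Complex.continuous_re).sdiff isClosed_singleton

lemma Om_preconnected : IsPreconnected Om := by
  have hV1 : IsPreconnected ({z : ℂ | -1 < z.re} ∩ {z : ℂ | z.re < 1}) :=
    (Convex.inter (convex_halfSpace_re_gt (-1)) (convex_halfSpace_re_lt 1)).isPreconnected
  have hV2 : IsPreconnected ({z : ℂ | -1 < z.re} ∩ {z : ℂ | 0 < z.im}) :=
    (Convex.inter (convex_halfSpace_re_gt (-1)) (convex_halfSpace_im_gt 0)).isPreconnected
  have hV3 : IsPreconnected ({z : ℂ | -1 < z.re} ∩ {z : ℂ | z.im < 0}) :=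
    (Convex.inter (convex_halfSpace_re_gt (-1)) (convex_halfSpace_im_lt 0)).isPreconnected
  have hV4 : IsPreconnected {z : ℂ | 1 < z.re} := (convex_halfSpace_re_gt 1).isPreconnected
  have h12 := IsPreconnected.union Complex.I
    (by simp [Complex.I_re, Complex.I_im]) (by simp [Complex.I_re, Complex.I_im]) hV1 hV2
  have h123 := IsPreconnected.union (-Complex.I)
    (Or.inl (by simp [Complex.I_re, Complex.I_im]))
    (by simp [Complex.I_re, Complex.I_im]) h12 hV3
  have h1234 := IsPreconnected.union (2 + Complex.I)
    (Or.inl (Or.inr ⟨by simp [Complex.add_re]; norm_num, by simp [Complex.add_im]⟩))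
    (by simp only [mem_setOf_eq, Complex.add_re, Complex.re_ofNat, Complex.I_re]; norm_num)
    h123 hV4
  have hset : Om = (({z : ℂ | -1 < z.re} ∩ {z : ℂ | z.re < 1} ∪
      {z : ℂ | -1 < z.re} ∩ {z : ℂ | 0 < z.im}) ∪
      {z : ℂ | -1 < z.re} ∩ {z : ℂ | z.im < 0}) ∪ {z : ℂ | 1 < z.re} := by
    ext z
    simp only [Om, mem_diff, mem_setOf_eq, mem_singleton_iff, mem_union, mem_inter_iff]
    constructor
    · rintro ⟨hre, hne⟩
      rcases lt_trichotomy z.re 1 with h | h | h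
      · exact Or.inl (Or.inl (Or.inl ⟨hre, h⟩))
      · rcases lt_trichotomy z.im 0 with hi | hi | hi
        · exact Or.inl (Or.inr ⟨hre, hi⟩)
        · exfalso; apply hne; apply Complex.ext <;> simp [h, hi]
        · exact Or.inl (Or.inl (Or.inr ⟨hre, hi⟩))
      · exact Or.inr h
    · rintro (((⟨h1, h2⟩ | ⟨h1, h2⟩) | ⟨h1, h2⟩) | h)
      · exact ⟨h1, fun hz => by rw [hz] at h2; simp at h2⟩
      · exact ⟨h1, fun hz => by rw [hz] at h2; simp at h2⟩
      · exact ⟨h1, fun hz => by rw [hz] at h2; simp at h2⟩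
      · refine ⟨by linarith, fun hz => by rw [hz] at h; simp at h⟩
  rw [hset]
  exact h1234

lemma Gfun_diff : DifferentiableOn ℂ Gfun Om := by
  intro z hz
  obtain ⟨hre, hne⟩ := hz
  have hne' : z ≠ 1 := hne
  apply DifferentiableAt.differentiableWithinAt
  apply DifferentiableAt.add
  · exact (dA hre).add (dC hre)
  · exact (differentiableAt_const 1).div (differentiableAt_id.sub_const 1)
      (sub_ne_zero.mpr hne')

lemma Zfun_diff : DifferentiableOn ℂ Zfun Om := by
  intro z hz
  obtain ⟨hre, hne⟩ := hz
  have hne' : z ≠ (1:ℂ) := hne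
  apply DifferentiableAt.differentiableWithinAt
  apply DifferentiableAt.mul
  apply DifferentiableAt.mul
  · exact ((differentiableAt_const 1).sub differentiableAt_id).const_cpow
      (Or.inl two_ne_zero)
  · have : ∀ m : ℕ, z + 1 ≠ -m := by
      intro m h
      have := congrArg Complex.re h
      simp at this
      have : (0:ℝ) ≤ (m:ℝ) := Nat.cast_nonneg m
      simp only [mem_setOf_eq] at hre
      linarith
    exact (Complex.differentiableAt_Gamma _ this).comp z (differentiableAt_id.add_const 1)
  · exact differentiableAt_riemannZeta hne'

lemma G_eq_Z_on_Om : Set.EqOn Gfun Zfun Om := by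
  have hGa := Gfun_diff.analyticOnNhd Om_open
  have hZa := Zfun_diff.analyticOnNhd Om_open
  have h2mem : (2:ℂ) ∈ Om := by
    refine ⟨?_, ?_⟩
    · show (-1:ℝ) < (2:ℂ).re
      norm_num
    · simp only [mem_singleton_iff]
      norm_num
  have hev : Gfun =ᶠ[𝓝 (2:ℂ)] Zfun := by
    have hopen : IsOpen {z : ℂ | 1 < z.re} := isOpen_lt continuous_const Complex.continuous_re
    have h2m : (2:ℂ) ∈ {z : ℂ | 1 < z.re} := by
      show (1:ℝ) < (2:ℂ).re
      norm_num
    filter_upwards [hopen.mem_nhds h2m] with z hz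
    exact G_eq_Z_gt hz
  exact hGa.eqOn_of_preconnected_of_eventuallyEq hZa Om_preconnected h2mem hev

theorem zeta_sinh_sq_gamma (s : ℂ) (h0 : -1 < s.re) (h1 : s.re < 1) :
    riemannZeta s = (2 : ℂ) ^ (s - 1) / Complex.Gamma (1 + s) *
      ∫ t in Set.Ioi (0 : ℝ),
        (t : ℂ) ^ s * ((1 / (Real.sinh t) ^ 2 - 1 / t ^ 2 : ℝ) : ℂ) := by
  have hsOm : s ∈ Om := by
    refine ⟨h0, ?_⟩
    simp only [mem_singleton_iff]
    intro h
    rw [h] at h1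
    simp at h1
  have hI : (∫ t in Set.Ioi (0:ℝ), (t:ℂ) ^ s * ((1 / (Real.sinh t) ^ 2 - 1 / t ^ 2 : ℝ) : ℂ))
      = (2:ℂ) ^ (1 - s) * Complex.Gamma (s + 1) * riemannZeta s := by
    have := I_eq_G h0 h1
    rw [show (∫ t in Set.Ioi (0:ℝ), (t:ℂ) ^ s * ((1 / (Real.sinh t) ^ 2 - 1 / t ^ 2 : ℝ) : ℂ))
      = ∫ t in Set.Ioi (0:ℝ), (t:ℂ) ^ s * zf t from rfl, this, G_eq_Z_on_Om hsOm, Zfun]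
  rw [hI]
  have hΓ : Complex.Gamma (1 + s) ≠ 0 :=
    Complex.Gamma_ne_zero_of_re_pos (by simp; linarith)
  have h2 : (2:ℂ) ^ (s - 1) * (2:ℂ) ^ (1 - s) = 1 := by
    rw [← Complex.cpow_add _ _ two_ne_zero, show s - 1 + (1 - s) = 0 by ring,
      Complex.cpow_zero]
  rw [show s + 1 = 1 + s by ring]
  field_simp
  linear_combination (-(riemannZeta s)) * h2
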